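/- Let W be a Coxeter group on index set I whose Coxeter diagram connects i to j (i ≠ j), and let (i = i_0, i_1, …, i_d = j) be a sequence with m_{i_{k−1}, i_k} > 2 for all k. Then w = s_{i_d} ⋯ s_{i_1} satisfies: w(α_i) is a positive linear combination of simple roots in which the coefficient of α_j is strictly positive (where α_i denotes simple roots of the standard geometric representation). -/

import Mathlib

/-- The simple reflection `s_k` acting on the root lattice `I →₀ ℤ`
(with simple roots the standard basis vectors), determined by the integral Cartan
pairings `a i j = ⟨αᵢ, αⱼ^∨⟩`: it sends `f ↦ f − ⟨f, α_k^∨⟩ α_k`. -/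
noncomputable def simpleRefl {I : Type*} [DecidableEq I] (a : I → I → ℤ) (k : I) (f : I →₀ ℤ) : I →₀ ℤ :=
  f - (f.sum fun i c => c * a i k) • Finsupp.single k 1

/-- Let `W` be a (crystallographic) Coxeter group on index set `I` acting on the root lattice
via the Cartan pairings `a i j = ⟨αᵢ, αⱼ^∨⟩` (`a i i = 2`, `a i j ≤ 0` for `i ≠ j`, and
`m_{ij} > 2` exactly when `a i j < 0`).  If `(i = i₀, i₁, …, i_d = j)` is a (repetition-free)
sequence with `m_{i_{k−1}, i_k} > 2` for all `k`, then `w = s_{i_d} ⋯ s_{i_1}` satisfies: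
`w(αᵢ)` is a nonnegative integral combination of simple roots in which the coefficient of
`α_j` is strictly positive, i.e. `w(αᵢ) ∈ ℤ_{>0} α_j + Σ_{k ≠ j} ℤ_{≥0} α_k`. -/
lemma chain_lemma {I : Type*} [DecidableEq I] (a : I → I → ℤ)
    (haneg : ∀ i j, i ≠ j → a i j ≤ 0) (s : I) (L : List I)
    (hch : (s :: L).Chain' (fun x y => a x y < 0)) (hnd : (s :: L).Nodup) :
    (∀ k, 0 ≤ (L.foldl (fun f t => simpleRefl a t f) (Finsupp.single s 1)) k) ∧
    (0 < (L.foldl (fun f t => simpleRefl a t f) (Finsupp.single s 1))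
        ((s :: L).getLast (by simp))) ∧
    (∀ k, (L.foldl (fun f t => simpleRefl a t f) (Finsupp.single s 1)) k ≠ 0 → k ∈ s :: L) := by
  induction L using List.reverseRecOn with
  | nil =>
    refine ⟨fun k => ?_, ?_, fun k hk => ?_⟩
    · rcases eq_or_ne k s with rfl | h
      · simp
      · simp [Finsupp.single_apply, h.symm]
    · simp
    · simp at hk ⊢
      by_contra h
      simp [Finsupp.single_apply, Ne.symm h] at hk
  | append_singleton L' t ih =>
    have hcons : s :: (L' ++ [t]) = (s :: L') ++ [t] := by simp
    rw [hcons] at hch hnd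
    unfold List.Chain' at hch
    rw [List.isChain_append] at hch
    obtain ⟨hch1, -, hlastrel⟩ := hch
    have hnd1 : (s :: L').Nodup := hnd.of_append_left
    have htnotmem : t ∉ s :: L' := fun ht => by
      have := List.disjoint_of_nodup_append hnd
      exact this ht (by simp)
    obtain ⟨hnn, hpos, hsupp⟩ := ih hch1 hnd1
    set g' := L'.foldl (fun f t => simpleRefl a t f) (Finsupp.single s 1) with hg'
    have hfold : (L' ++ [t]).foldl (fun f t => simpleRefl a t f) (Finsupp.single s 1)
        = simpleRefl a t g' := by
      rw [List.foldl_append]; rfl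
    set last := (s :: L').getLast (by simp) with hlast
    have hlastmem : last ∈ s :: L' := List.getLast_mem _
    have hrel : a last t < 0 := by
      apply hlastrel
      · rw [List.getLast?_eq_getLast (by simp)]; simp [hlast]
      · simp
    have hgt : g' t = 0 := by
      by_contra h
      exact htnotmem (hsupp t h)
    -- the sum S
    set S := g'.sum (fun i c => c * a i t) with hS
    have hSneg : S < 0 := by
      have hmem : last ∈ g'.support := Finsupp.mem_support_iff.mpr (ne_of_gt hpos)
      have hle : ∀ i ∈ g'.support, g' i * a i t ≤ 0 := by
        intro m hm
        have hmmem : m ∈ s :: L' := hsupp m (Finsupp.mem_support_iff.mp hm)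
        have hmt : m ≠ t := fun h => htnotmem (h ▸ hmmem)
        exact mul_nonpos_of_nonneg_of_nonpos (hnn m) (haneg m t hmt)
      calc S = ∑ m ∈ g'.support, g' m * a m t := by rw [hS, Finsupp.sum]
        _ < ∑ m ∈ g'.support, (0 : ℤ) :=
            Finset.sum_lt_sum hle ⟨last, hmem, mul_neg_of_pos_of_neg hpos hrel⟩
        _ = 0 := by simp
    have happly : ∀ m, simpleRefl a t g' m = g' m - S * (Finsupp.single t 1 : I →₀ ℤ) m := by
      intro m
      simp only [simpleRefl, Finsupp.sub_apply, Finsupp.smul_apply, smul_eq_mul, hS]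
    refine ⟨fun k => ?_, ?_, fun k hk => ?_⟩
    · rw [hfold, happly]
      rcases eq_or_ne k t with rfl | h
      · rw [hgt, Finsupp.single_apply]; simp; omega
      · rw [Finsupp.single_apply, if_neg (Ne.symm h)]
        simpa using hnn k
    · have : ((s :: (L' ++ [t])).getLast (by simp)) = t := by
        simp
      rw [this, hfold, happly, hgt, Finsupp.single_apply, if_pos rfl]
      omega
    · rw [hfold, happly] at hk
      rcases eq_or_ne k t with rfl | h
      · simp
      · rw [Finsupp.single_apply, if_neg (Ne.symm h)] at hk
        simp at hk
        have := hsupp k (by simpa using hk)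
        simp at this ⊢
        tauto


theorem refl_chain_positive {I : Type*} [DecidableEq I] (a : I → I → ℤ)
    (ha2 : ∀ i, a i i = 2) (haneg : ∀ i j, i ≠ j → a i j ≤ 0)
    (d : ℕ) (i j : I) (hij : i ≠ j)
    (seq : Fin (d + 1) → I) (hinj : Function.Injective seq)
    (h0 : seq 0 = i) (hd : seq (Fin.last d) = j)
    (hadm : ∀ k : Fin d, a (seq k.castSucc) (seq k.succ) < 0) :
    ∀ g : I →₀ ℤ,
      g = (List.ofFn fun k : Fin d => seq k.succ).foldl
            (fun f t => simpleRefl a t f) (Finsupp.single i 1) →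
      0 < g j ∧ ∀ k : I, 0 ≤ g k := by
  intro g hg
  set L := List.ofFn fun k : Fin d => seq k.succ with hL
  have hcons : i :: L = List.ofFn seq := by
    rw [List.ofFn_succ, h0]
  have hch : (i :: L).Chain' (fun x y => a x y < 0) := by
    rw [hcons]
    unfold List.Chain'
    rw [List.isChain_iff_getElem]
    intro k hk
    simp only [List.length_ofFn] at hk
    have h1 : k < d + 1 := by omega
    have h2 : k + 1 < d + 1 := by omega
    rw [List.getElem_ofFn, List.getElem_ofFn]
    convert hadm ⟨k, by omega⟩ using 2 <;> rfl
  have hnd : (i :: L).Nodup := by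
    rw [hcons]
    exact List.nodup_ofFn.mpr hinj
  have hlast : (i :: L).getLast (by simp) = j := by
    have h1 : (i :: L).getLast? = some ((i :: L).getLast (by simp)) :=
      List.getLast?_eq_getLast _
    have h2 : (List.ofFn seq).getLast? = some (seq (Fin.last d)) := by
      rw [List.getLast?_eq_getLast (by simp), List.getLast_eq_getElem, List.getElem_ofFn]
      have : (⟨(List.ofFn seq).length - 1, by simp⟩ : Fin (d + 1)) = Fin.last d := by
        apply Fin.ext
        simp [Fin.last]
      rw [this]
    conv at h1 => lhs; rw [hcons]
    rw [h2] at h1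
    rw [← hd]
    exact (Option.some_injective _ h1.symm)
  obtain ⟨hnn, hpos, -⟩ := chain_lemma a haneg i L hch hnd
  rw [hlast] at hpos
  rw [hg]
  exact ⟨hpos, hnn⟩
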